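/- arXiv:2009.11515 — 8 statements merged into one kernel-verified Lean document; each statement's English description precedes it below -/
import Mathlib

section
/- Let n ≥ 1, let μ be the normalized Haar probability measure on the unitary group U(n), and let ξ ∈ ℂ with |ξ| = 1. Let Λ : U(n) → Multiset ℂ send Q to the multiset of roots (with multiplicity) of the characteristic polynomial of Q over ℂ. Then the pushforward of μ under Λ equals the pushforward of μ under the map Q ↦ (Λ Q).map (ξ · ·), i.e. the joint eigenvalue distribution of Haar-distributed unitary matrices is invariant under multiplication of all eigenvalues by any fixed unimodular scalar. -/
open MeasureTheory

noncomputable instance matrixMeasurableSpace {m n α : Type*} [MeasurableSpace α] :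
    MeasurableSpace (Matrix m n α) :=
  (inferInstance : MeasurableSpace (m → n → α))

/-- The multiset of eigenvalues (roots of the characteristic polynomial, with
multiplicity) of a complex matrix. -/
noncomputable def eigMultiset (n : ℕ) (A : Matrix (Fin n) (Fin n) ℂ) : Multiset ℂ :=
  A.charpoly.roots

open Polynomial in
lemma eval_charpoly' {n : ℕ} (A : Matrix (Fin n) (Fin n) ℂ) (x : ℂ) :
    A.charpoly.eval x = (x • (1 : Matrix (Fin n) (Fin n) ℂ) - A).det := by
  rw [Matrix.charpoly, _root_.eval_det, Matrix.matPolyEquiv_charmatrix]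
  simp only [eval_sub, eval_X, eval_C]
  congr 1
  ext i j
  simp [Matrix.scalar, Matrix.smul_apply, Matrix.one_apply, Matrix.diagonal]

open Polynomial in
lemma roots_charpoly_smul {n : ℕ} (c : ℂ) (hc : c ≠ 0) (A : Matrix (Fin n) (Fin n) ℂ) :
    (c • A).charpoly.roots = A.charpoly.roots.map (fun z => c * z) := by
  set s := A.charpoly.roots with hs
  have hsplit : A.charpoly.Splits := IsAlgClosed.splits _
  have hcard : Multiset.card s = n := by
    rw [hs, (splits_iff_card_roots).mp hsplit, Matrix.charpoly_natDegree_eq_dim, Fintype.card_fin]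
  have hp : A.charpoly = (s.map fun r => X - C r).prod :=
    hsplit.eq_prod_roots_of_monic (Matrix.charpoly_monic A)
  have hq : (c • A).charpoly = (s.map fun r => X - C (c * r)).prod := by
    apply Polynomial.funext
    intro x
    rw [eval_charpoly']
    have h1 : x • (1 : Matrix (Fin n) (Fin n) ℂ) - c • A
        = c • ((x / c) • (1 : Matrix (Fin n) (Fin n) ℂ) - A) := by
      rw [smul_sub, smul_smul, mul_div_cancel₀ _ hc]
    rw [h1, Matrix.det_smul, ← eval_charpoly', Fintype.card_fin, hp]
    simp only [eval_multiset_prod, Multiset.map_map, Function.comp, eval_sub, eval_X, eval_C]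
    rw [show (s.map fun r => x - c * r) = s.map fun r => c * (x / c - r) by
      apply Multiset.map_congr rfl; intro r _; field_simp]
    rw [Multiset.prod_map_mul]
    congr 1
    simp [hcard]
  rw [hq]
  have : Multiset.map (fun r => X - C (c * r)) s
      = Multiset.map (fun r => X - C r) (Multiset.map (fun z => c * z) s) := by
    rw [Multiset.map_map]; rfl
  rw [this]
  exact roots_multiset_prod_X_sub_C _

instance {n : ℕ} : BorelSpace (Matrix (Fin n) (Fin n) ℂ) :=
  (inferInstance : BorelSpace (Fin n → Fin n → ℂ))

instance {n : ℕ} : BorelSpace (Matrix.unitaryGroup (Fin n) ℂ) :=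
  Subtype.borelSpace (Matrix.unitaryGroup (Fin n) ℂ : Set (Matrix (Fin n) (Fin n) ℂ))

/-- The joint eigenvalue distribution of Haar-distributed unitary matrices is invariant
under multiplication of all eigenvalues by a fixed unimodular scalar `ξ`: the pushforward
of the Haar probability measure under `Q ↦ Λ Q` equals its pushforward under
`Q ↦ (Λ Q).map (ξ * ·)`, as measured on every set of multisets. -/
theorem haar_unitary_eigenvalues_mul_invariant (n : ℕ) (hn : 1 ≤ n)
    (μ : Measure (Matrix.unitaryGroup (Fin n) ℂ))
    [μ.IsHaarMeasure] [IsProbabilityMeasure μ]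
    (ξ : ℂ) (hξ : ‖ξ‖ = 1) :
    ∀ S : Set (Multiset ℂ),
      μ ((fun Q => eigMultiset n (Q : Matrix (Fin n) (Fin n) ℂ)) ⁻¹' S) =
      μ ((fun Q => (eigMultiset n (Q : Matrix (Fin n) (Fin n) ℂ)).map
          (fun z => ξ * z)) ⁻¹' S) := by
  intro S
  have hξ0 : ξ ≠ 0 := by
    intro h; rw [h] at hξ; simp at hξ
  have h1 : (starRingEnd ℂ) ξ * ξ = 1 := by
    rw [mul_comm, Complex.mul_conj, Complex.normSq_eq_norm_sq, hξ]
    norm_num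
  have h2 : ξ * (starRingEnd ℂ) ξ = 1 := by rw [mul_comm]; exact h1
  have hmem : (ξ • (1 : Matrix (Fin n) (Fin n) ℂ)) ∈ Matrix.unitaryGroup (Fin n) ℂ := by
    constructor <;>
      simp [Matrix.star_eq_conjTranspose, Matrix.conjTranspose_smul,
        Matrix.conjTranspose_one, Matrix.smul_mul, Matrix.mul_smul, smul_smul, h1, h2]
  set g : Matrix.unitaryGroup (Fin n) ℂ := ⟨ξ • 1, hmem⟩ with hg
  have key : ∀ Q : Matrix.unitaryGroup (Fin n) ℂ,
      (eigMultiset n (Q : Matrix (Fin n) (Fin n) ℂ)).map (fun z => ξ * z)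
        = eigMultiset n ((g * Q : Matrix.unitaryGroup (Fin n) ℂ) : Matrix (Fin n) (Fin n) ℂ) := by
    intro Q
    have : ((g * Q : Matrix.unitaryGroup (Fin n) ℂ) : Matrix (Fin n) (Fin n) ℂ)
        = ξ • (Q : Matrix (Fin n) (Fin n) ℂ) := by
      simp [hg, Matrix.UnitaryGroup.mul_val, Matrix.smul_mul]
    rw [this, eigMultiset, eigMultiset, roots_charpoly_smul ξ hξ0]
  have : ((fun Q : Matrix.unitaryGroup (Fin n) ℂ =>
        (eigMultiset n (Q : Matrix (Fin n) (Fin n) ℂ)).map (fun z => ξ * z)) ⁻¹' S)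
      = (fun Q => g * Q) ⁻¹' ((fun Q : Matrix.unitaryGroup (Fin n) ℂ =>
        eigMultiset n (Q : Matrix (Fin n) (Fin n) ℂ)) ⁻¹' S) := by
    ext Q; simp [Set.mem_preimage, key Q]
  rw [this, measure_preimage_mul]
end

section
/- Let n ≥ 1, let μ₁ be the normalized Haar probability measure on the special unitary group SU(n), and let ζ ∈ ℂ satisfy ζⁿ = 1. Let Λ : SU(n) → Multiset ℂ send Q to the multiset of roots (with multiplicity) of the characteristic polynomial of Q over ℂ. Then the pushforward of μ₁ under Λ equals the pushforward of μ₁ under the map Q ↦ (Λ Q).map (ζ · ·). In particular (taking ζ = e^{2πi/n}), the joint eigenvalue distribution of Haar-distributed matrices from SU(n) has phases that are 2π/n-periodic. -/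
open MeasureTheory

/-- The group structure on the special unitary group. -/
noncomputable instance specialUnitaryGroup.instGroup
    {m : Type*} [DecidableEq m] [Fintype m] {α : Type*} [CommRing α] [StarRing α] :
    Group (Matrix.specialUnitaryGroup m α) :=
  { (inferInstance : Monoid (Matrix.specialUnitaryGroup m α)) with
    inv := fun x => ⟨star (x : Matrix m m α), by
      rcases Submonoid.mem_inf.mp x.2 with ⟨hu, hd⟩
      refine Submonoid.mem_inf.mpr ⟨Unitary.star_mem hu, ?_⟩
      rw [MonoidHom.mem_mker] at hd ⊢
      simpa [Matrix.star_eq_conjTranspose, Matrix.det_conjTranspose] using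
        congrArg star hd⟩
    inv_mul_cancel := fun x => by
      have h : star (x : Matrix m m α) * (x : Matrix m m α) = 1 :=
        (Submonoid.mem_inf.mp x.2).1.1
      exact Subtype.ext h }

open Polynomial Matrix

lemma eval_charpoly_aux {n : ℕ} (A : Matrix (Fin n) (Fin n) ℂ) (r : ℂ) :
    A.charpoly.eval r = (r • (1 : Matrix (Fin n) (Fin n) ℂ) - A).det := by
  rw [Matrix.charpoly, _root_.eval_det]
  congr 1
  rw [matPolyEquiv_charmatrix]
  simp [Matrix.scalar, smul_eq_diagonal_mul]

lemma roots_charpoly_smul_aux {n : ℕ} (hn : 1 ≤ n) (A : Matrix (Fin n) (Fin n) ℂ)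
    (ζ : ℂ) (hζ : ζ ^ n = 1) :
    (ζ • A).charpoly.roots = A.charpoly.roots.map (fun z => ζ * z) := by
  have hζ0 : ζ ≠ 0 := by
    rintro rfl
    simp [zero_pow (by omega : n ≠ 0)] at hζ
  have hsplit : A.charpoly = (A.charpoly.roots.map (fun a => X - C a)).prod := by
    conv_lhs => rw [(IsAlgClosed.splits A.charpoly).eq_prod_roots_of_monic
      A.charpoly_monic]
  have hcard : A.charpoly.roots.card = n := by
    rw [(Polynomial.splits_iff_card_roots).mp (IsAlgClosed.splits _),
      Matrix.charpoly_natDegree_eq_dim, Fintype.card_fin]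
  have key : (ζ • A).charpoly =
      ((A.charpoly.roots.map (fun z => ζ * z)).map (fun a => X - C a)).prod := by
    apply Polynomial.funext
    intro x
    rw [eval_charpoly_aux]
    have h1 : x • (1 : Matrix (Fin n) (Fin n) ℂ) - ζ • A
        = ζ • ((ζ⁻¹ * x) • (1 : Matrix (Fin n) (Fin n) ℂ) - A) := by
      rw [smul_sub, smul_smul, mul_inv_cancel_left₀ hζ0]
    rw [h1, Matrix.det_smul, Fintype.card_fin, hζ, one_mul, ← eval_charpoly_aux]
    conv_lhs => rw [hsplit]
    rw [Polynomial.eval_multiset_prod, Polynomial.eval_multiset_prod]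
    simp only [Multiset.map_map, Function.comp, eval_sub, eval_X, eval_C]
    have : (Multiset.map (fun a => ζ⁻¹ * x - a) A.charpoly.roots).prod
        = (Multiset.map (fun a => ζ⁻¹ * (x - ζ * a)) A.charpoly.roots).prod := by
      congr 1; apply Multiset.map_congr rfl; intro a _
      field_simp
    rw [this, show (fun a => ζ⁻¹ * (x - ζ * a)) =
        (fun a => (fun _ : ℂ => ζ⁻¹) a * (fun a => x - ζ * a) a) from rfl,
      Multiset.prod_map_mul, Multiset.map_const', Multiset.prod_replicate, hcard]
    rw [inv_pow, hζ, inv_one, one_mul]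
  rw [key, Polynomial.roots_multiset_prod_X_sub_C]

/-- The joint eigenvalue distribution of Haar-distributed matrices from `SU(n)` is
invariant under multiplication of all eigenvalues by a fixed `n`-th root of unity `ζ`:
the pushforward of the Haar probability measure under `Q ↦ Λ Q` equals its pushforward
under `Q ↦ (Λ Q).map (ζ * ·)`, as measured on every set of multisets.  In particular the
phases of the eigenvalue distribution are `2π/n`-periodic. -/
theorem haar_specialUnitary_eigenvalues_root_of_unity_invariant (n : ℕ) (hn : 1 ≤ n)
    (μ : Measure (Matrix.specialUnitaryGroup (Fin n) ℂ))
    [μ.IsHaarMeasure] [IsProbabilityMeasure μ]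
    (ζ : ℂ) (hζ : ζ ^ n = 1) :
    ∀ S : Set (Multiset ℂ),
      μ ((fun Q => eigMultiset n (Q : Matrix (Fin n) (Fin n) ℂ)) ⁻¹' S) =
      μ ((fun Q => (eigMultiset n (Q : Matrix (Fin n) (Fin n) ℂ)).map
          (fun z => ζ * z)) ⁻¹' S) := by
  intro S
  have hζ0 : ζ ≠ 0 := by
    rintro rfl
    simp [zero_pow (by omega : n ≠ 0)] at hζ
  have hnorm : ‖ζ‖ = 1 := Complex.norm_eq_one_of_pow_eq_one hζ (by omega)
  have hmem : (ζ • (1 : Matrix (Fin n) (Fin n) ℂ)) ∈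
      Matrix.specialUnitaryGroup (Fin n) ℂ := by
    rw [Matrix.mem_specialUnitaryGroup_iff]
    have h1 : ζ * (starRingEnd ℂ) ζ = 1 := by
      rw [Complex.mul_conj]
      norm_cast
      rw [Complex.normSq_eq_norm_sq, hnorm, one_pow]
    constructor
    · rw [Matrix.mem_unitaryGroup_iff]
      simp [smul_smul, Matrix.smul_mul, Matrix.mul_smul,
        mul_comm ((starRingEnd ℂ) ζ) ζ, h1]
    · simp [hζ]
  set g : Matrix.specialUnitaryGroup (Fin n) ℂ := ⟨ζ • 1, hmem⟩ with hg
  have hmul : ∀ Q : Matrix.specialUnitaryGroup (Fin n) ℂ,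
      ((g * Q : Matrix.specialUnitaryGroup (Fin n) ℂ) : Matrix (Fin n) (Fin n) ℂ)
        = ζ • (Q : Matrix (Fin n) (Fin n) ℂ) := by
    intro Q
    show (ζ • (1 : Matrix (Fin n) (Fin n) ℂ)) * (Q : Matrix (Fin n) (Fin n) ℂ) = _
    rw [Matrix.smul_mul, Matrix.one_mul]
  have heq : (fun Q : Matrix.specialUnitaryGroup (Fin n) ℂ =>
      (eigMultiset n (Q : Matrix (Fin n) (Fin n) ℂ)).map (fun z => ζ * z)) ⁻¹' S
      = (fun Q => g * Q) ⁻¹'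
        ((fun Q : Matrix.specialUnitaryGroup (Fin n) ℂ =>
          eigMultiset n (Q : Matrix (Fin n) (Fin n) ℂ)) ⁻¹' S) := by
    ext Q
    simp only [Set.mem_preimage]
    rw [show eigMultiset n ((g * Q : _) : Matrix (Fin n) (Fin n) ℂ)
        = (eigMultiset n (Q : Matrix (Fin n) (Fin n) ℂ)).map (fun z => ζ * z) by
      rw [hmul Q]; exact roots_charpoly_smul_aux hn _ ζ hζ]
  haveI : BorelSpace (Matrix (Fin n) (Fin n) ℂ) := Pi.borelSpace
  haveI : BorelSpace (Matrix.specialUnitaryGroup (Fin n) ℂ) :=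
    Subtype.borelSpace (Matrix.specialUnitaryGroup (Fin n) ℂ : Set (Matrix (Fin n) (Fin n) ℂ))
  rw [heq, measure_preimage_mul]
end

section
/- Let n ≥ 2 and let H = P₁ ⋯ P_{n−1} · D be an n×n complex matrix, where for each j = 1, …, n−1, P_j = I − (2/‖v_j‖²) v_j v_j* is the Householder transformation of a nonzero vector v_j ∈ ℂⁿ whose entries vanish except possibly in positions j and j+1, and D is a unitary diagonal matrix (all diagonal entries of modulus 1). Then there exist plane rotations with real sines G₁, …, G_{n−1}, where G_j equals the identity except for the 2×2 block [[c_j, s_j], [−s_j, conj(c_j)]] in rows and columns j, j+1 with c_j ∈ ℂ, s_j ∈ ℝ, |c_j|² + s_j² = 1, and a unitary diagonal matrix D̃, such that H = G₁ ⋯ G_{n−1} · D̃. -/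
/-- The Householder transformation `P(v) = I - (2/‖v‖₂²) v v*` of a vector `v ∈ ℂⁿ`
(with `‖·‖₂` the Euclidean norm, so `‖v‖₂² = ∑ i, |v i|²`). -/
noncomputable def householder {n : ℕ} (v : Fin n → ℂ) : Matrix (Fin n) (Fin n) ℂ :=
  1 - (((2 / ∑ i, Complex.normSq (v i) : ℝ) : ℂ)) • Matrix.vecMulVec v (star v)

/-- The plane rotation acting on indices `i, i'`, equal to the identity except for the
`2 × 2` block `[[c, s], [-s, conj c]]` in rows/columns `i, i'`. -/
noncomputable def planeRotAt {n : ℕ} (i i' : Fin n) (c : ℂ) (s : ℝ) :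
    Matrix (Fin n) (Fin n) ℂ :=
  Matrix.of fun k l =>
    if k = i ∧ l = i then c
    else if k = i ∧ l = i' then (s : ℂ)
    else if k = i' ∧ l = i then (-s : ℂ)
    else if k = i' ∧ l = i' then starRingEnd ℂ c
    else if k = l then 1 else 0

lemma conj_mul_self_of_abs_one {z : ℂ} (h : ‖z‖ = 1) :
    (starRingEnd ℂ) z * z = 1 := by
  rw [mul_comm, Complex.mul_conj]
  norm_cast
  rw [← Complex.sq_norm, h]; norm_num

lemma diag_mul_planeRot {n : ℕ} (i i' : Fin n) (hne : i ≠ i') (c : ℂ) (s : ℝ)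
    (d : Fin n → ℂ) (hdi : ‖d i‖ = 1) (hdi' : ‖d i'‖ = 1) :
    Matrix.diagonal d * planeRotAt i i' c s =
      planeRotAt i i' (d i * c * (starRingEnd ℂ) (d i')) s *
        Matrix.diagonal (fun k => d (Equiv.swap i i' k)) := by
  have h1 := conj_mul_self_of_abs_one hdi
  have h2 := conj_mul_self_of_abs_one hdi'
  ext k l
  rw [Matrix.diagonal_mul, Matrix.mul_diagonal]
  simp only [planeRotAt, Matrix.of_apply]
  by_cases hk : k = i <;> by_cases hk' : k = i' <;>
    by_cases hl : l = i <;> by_cases hl' : l = i' <;>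
    simp_all [Equiv.swap_apply_of_ne_of_ne, Equiv.swap_apply_left, Equiv.swap_apply_right] <;>
    first
      | (linear_combination (-(d i * c)) * h2)
      | (linear_combination (-(d i' * (starRingEnd ℂ) c)) * h1)
      | ring


lemma householder_apply {n : ℕ} (v : Fin n → ℂ) (k l : Fin n) :
    householder v k l = (if k = l then 1 else 0) -
      ((2 / ∑ i, Complex.normSq (v i) : ℝ) : ℂ) * (v k * (starRingEnd ℂ) (v l)) := by
  simp [householder, Matrix.sub_apply, Matrix.one_apply, Matrix.smul_apply,
    Matrix.vecMulVec_apply, Complex.star_def, mul_assoc]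

lemma householder_factor {n : ℕ} (i i' : Fin n) (hne : i ≠ i') (v : Fin n → ℂ)
    (hv : v ≠ 0) (hs : ∀ k, k ≠ i → k ≠ i' → v k = 0) :
    ∃ (c : ℂ) (s : ℝ) (e : Fin n → ℂ),
      ‖c‖ ^ 2 + s ^ 2 = 1 ∧ (∀ k, ‖e k‖ = 1) ∧
      householder v = planeRotAt i i' c s * Matrix.diagonal e := by
  set a := v i with ha
  set b := v i' with hb
  set N : ℝ := Complex.normSq a + Complex.normSq b with hN
  have hNsum : (∑ k, Complex.normSq (v k)) = N := by
    rw [← Finset.sum_subset (Finset.subset_univ ({i, i'} : Finset (Fin n)))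
      (fun x _ hx => by
        simp only [Finset.mem_insert, Finset.mem_singleton, not_or] at hx
        rw [hs x hx.1 hx.2, Complex.normSq_zero])]
    rw [Finset.sum_pair hne]
  have hNpos : 0 < N := by
    obtain ⟨k, hk⟩ := Function.ne_iff.mp hv
    have hki : k = i ∨ k = i' := by
      by_contra h
      push_neg at h
      exact hk (hs k h.1 h.2)
    have h1 : 0 ≤ Complex.normSq a := Complex.normSq_nonneg _
    have h2 : 0 ≤ Complex.normSq b := Complex.normSq_nonneg _
    rcases hki with rfl | rfl
    · have : 0 < Complex.normSq (v k) := Complex.normSq_pos.mpr hk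
      rw [hN]; linarith
    · have : 0 < Complex.normSq (v k) := Complex.normSq_pos.mpr hk
      rw [hN]; linarith
  set t : ℝ := 1 - 2 * Complex.normSq a / N with ht
  set u : ℂ := ((-(2 / N) : ℝ) : ℂ) * (a * (starRingEnd ℂ) b) with hu
  have hNne : N ≠ 0 := ne_of_gt hNpos
  have hnsu : Complex.normSq u = (2 / N) ^ 2 * (Complex.normSq a * Complex.normSq b) := by
    rw [hu, Complex.normSq_mul, Complex.normSq_mul, Complex.normSq_conj,
      Complex.normSq_ofReal]
    ring
  have key : t ^ 2 + Complex.normSq u = 1 := by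
    rw [hnsu, ht]
    field_simp
    rw [hN]
    ring
  by_cases hu0 : u = 0
  · -- off-diagonal vanishes
    have hab : a * (starRingEnd ℂ) b = 0 := by
      have hr : ((-(2 / N) : ℝ) : ℂ) ≠ 0 := by
        simp only [ne_eq, Complex.ofReal_eq_zero]
        intro h
        apply hNne
        field_simp at h
        norm_num at h
      rcases mul_eq_zero.mp hu0 with h | h
      · exact absurd h hr
      · exact h
    have hba : b * (starRingEnd ℂ) a = 0 := by
      have := congrArg (starRingEnd ℂ) hab
      simpa [mul_comm] using this
    have ht1 : t ^ 2 = 1 := by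
      rw [hu0, Complex.normSq_zero] at key; linarith
    have habs : |t| = 1 := by nlinarith [abs_nonneg t, sq_abs t]
    refine ⟨1, 0, fun k => if k = i then (t : ℂ) else if k = i' then (-t : ℂ) else 1,
      by simp, fun k => ?_, ?_⟩
    · by_cases h1 : k = i <;> by_cases h2 : k = i' <;>
        simp [h1, h2, hne, hne.symm, Complex.norm_real, Real.norm_eq_abs, habs]
    · ext k l
      rw [Matrix.mul_diagonal, householder_apply, hNsum]
      simp only [planeRotAt, Matrix.of_apply]
      have hNne' : Complex.normSq a + Complex.normSq b ≠ 0 := hN ▸ hNne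
      have hr1 : 1 - 2 / N * Complex.normSq a = t := by rw [ht]; ring
      have hr2 : 1 - 2 / N * Complex.normSq b = -t := by
        rw [ht, hN]; field_simp; ring
      have hii : (1 : ℂ) - ((2 / N : ℝ) : ℂ) * (a * (starRingEnd ℂ) a) = ((t : ℝ) : ℂ) := by
        rw [Complex.mul_conj]; exact_mod_cast congrArg Complex.ofReal hr1
      have hii' : (1 : ℂ) - ((2 / N : ℝ) : ℂ) * (b * (starRingEnd ℂ) b) = ((-t : ℝ) : ℂ) := by
        rw [Complex.mul_conj]; exact_mod_cast congrArg Complex.ofReal hr2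
      by_cases hk : k = i <;> by_cases hk' : k = i' <;>
        by_cases hl : l = i <;> by_cases hl' : l = i'
      · exact absurd (hk.symm.trans hk') hne
      · exact absurd (hk.symm.trans hk') hne
      · exact absurd (hk.symm.trans hk') hne
      · exact absurd (hk.symm.trans hk') hne
      · exact absurd (hl.symm.trans hl') hne
      · -- k = i, l = i
        simp only [hk, hl, ← ha]
        simpa [hne, hne.symm] using hii
      · -- k = i, l = i'
        have h1 : k ≠ l := fun h => hne (hk.symm.trans (h.trans hl'))
        simp [hk, hl', h1, hne, hne.symm, ← ha, ← hb, hab]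
      · -- k = i, l other
        have hvl : v l = 0 := hs l hl hl'
        have h1 : k ≠ l := fun h => hl (h.symm.trans hk)
        simp [hk, hl, hl', hvl, h1, hne, hne.symm]
      · exact absurd (hl.symm.trans hl') hne
      · -- k = i', l = i
        have h1 : k ≠ l := fun h => hne (hl.symm.trans (h.symm.trans hk'))
        simp [hk', hl, h1, hne, hne.symm, ← ha, ← hb, hba]
      · -- k = i', l = i'
        simp only [hk', hl', ← hb]
        simpa [hne, hne.symm] using hii'
      · -- k = i', l other
        have hvl : v l = 0 := hs l hl hl'
        have h1 : k ≠ l := fun h => hl' (h.symm.trans hk')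
        simp [hk', hl, hl', hvl, h1, hne, hne.symm]
      · exact absurd (hl.symm.trans hl') hne
      · -- k other, l = i
        have hvk : v k = 0 := hs k hk hk'
        have h1 : k ≠ l := fun h => hk (h.trans hl)
        simp [hk, hk', hvk, h1, hl]
      · -- k other, l = i'
        have hvk : v k = 0 := hs k hk hk'
        have h1 : k ≠ l := fun h => hk' (h.trans hl')
        simp [hk, hk', hvk, h1, hl']
      · -- both other
        have hvk : v k = 0 := hs k hk hk'
        by_cases hkl : k = l
        · subst hkl; simp [hk, hk', hvk]
        · simp [hk, hk', hkl, hvk]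
  · set su : ℝ := ‖u‖ with hsu
    have hsupos : 0 < su := by
      rw [hsu]
      exact (norm_pos_iff.mpr hu0)
    have hsune : su ≠ 0 := ne_of_gt hsupos
    have hsuC : ((su : ℝ) : ℂ) ≠ 0 := by exact_mod_cast hsune
    have hcu : u * (starRingEnd ℂ) u = ((su ^ 2 : ℝ) : ℂ) := by
      rw [Complex.mul_conj, hsu, Complex.sq_norm]
    have habst : ‖(-(t : ℂ) * (u / su))‖ ^ 2 = t ^ 2 := by
      rw [norm_mul, norm_neg, norm_div, Complex.norm_real, Complex.norm_real, Real.norm_eq_abs,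
        Real.norm_eq_abs,
        abs_of_pos hsupos, ← hsu, div_self hsune, mul_one, sq_abs]
    refine ⟨-(t : ℂ) * (u / su), su,
      fun k => if k = i then -(starRingEnd ℂ) u / (su : ℂ) else if k = i' then u / (su : ℂ) else 1,
      ?_, fun k => ?_, ?_⟩
    · rw [habst, ← key, hsu, Complex.sq_norm]
    · by_cases h1 : k = i <;> by_cases h2 : k = i' <;>
        simp [h1, h2, hne, hne.symm, norm_div, Complex.norm_conj, Complex.norm_real, Real.norm_eq_abs,
          abs_of_pos hsupos, ← hsu, div_self hsune]
    · ext k l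
      rw [Matrix.mul_diagonal, householder_apply, hNsum]
      simp only [planeRotAt, Matrix.of_apply]
      have hNne' : Complex.normSq a + Complex.normSq b ≠ 0 := hN ▸ hNne
      have hr1 : 1 - 2 / N * Complex.normSq a = t := by rw [ht]; ring
      have hr2 : 1 - 2 / N * Complex.normSq b = -t := by
        rw [ht, hN]; field_simp; ring
      have hii : (1 : ℂ) - ((2 / N : ℝ) : ℂ) * (a * (starRingEnd ℂ) a) = ((t : ℝ) : ℂ) := by
        rw [Complex.mul_conj]; exact_mod_cast congrArg Complex.ofReal hr1
      have hii' : (1 : ℂ) - ((2 / N : ℝ) : ℂ) * (b * (starRingEnd ℂ) b) = ((-t : ℝ) : ℂ) := by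
        rw [Complex.mul_conj]; exact_mod_cast congrArg Complex.ofReal hr2
      have hab : (0 : ℂ) - ((2 / N : ℝ) : ℂ) * (a * (starRingEnd ℂ) b) = u := by
        rw [hu]; push_cast; ring
      have hba : (0 : ℂ) - ((2 / N : ℝ) : ℂ) * (b * (starRingEnd ℂ) a) = (starRingEnd ℂ) u := by
        rw [hu, map_mul, map_mul, Complex.conj_conj, Complex.conj_ofReal]
        push_cast; ring
      have hNC : ((N : ℝ) : ℂ) ≠ 0 := by exact_mod_cast hNne
      have htC : (1 : ℂ) - 2 / (N : ℂ) * (Complex.normSq a : ℂ) = ((t : ℝ) : ℂ) := by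
        rw [ht]; push_cast; ring
      have htC' : (1 : ℂ) - 2 / (N : ℂ) * (Complex.normSq b : ℂ) = ((-t : ℝ) : ℂ) := by
        have hNC' : ((Complex.normSq a : ℂ) + (Complex.normSq b : ℂ)) ≠ 0 := by
          exact_mod_cast hNne'
        rw [ht, hN]
        push_cast
        field_simp
        ring
      by_cases hk : k = i <;> by_cases hk' : k = i' <;>
        by_cases hl : l = i <;> by_cases hl' : l = i'
      · exact absurd (hk.symm.trans hk') hne
      · exact absurd (hk.symm.trans hk') hne
      · exact absurd (hk.symm.trans hk') hne
      · exact absurd (hk.symm.trans hk') hne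
      · exact absurd (hl.symm.trans hl') hne
      · -- k = i, l = i
        simp only [hk, hl, ← ha]
        simp [hne, hne.symm]
        rw [Complex.mul_conj, htC]
        field_simp
        push_cast at hcu ⊢
        linear_combination (-(t : ℂ)) * hcu
      · -- k = i, l = i'
        simp only [hk, hl', ← ha, ← hb]
        simp [hne, hne.symm]
        rw [← mul_div_assoc, mul_div_cancel_left₀ _ hsuC, hu]
        push_cast
        ring
      · -- k = i, l other
        have hvl : v l = 0 := hs l hl hl'
        have h1 : k ≠ l := fun h => hl (h.symm.trans hk)
        simp [hk, hl, hl', hvl, h1, hne, hne.symm]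
      · exact absurd (hl.symm.trans hl') hne
      · -- k = i', l = i
        simp only [hk', hl, ← ha, ← hb]
        simp [hne, hne.symm]
        rw [← mul_div_assoc, mul_div_cancel_left₀ _ hsuC, hu, map_mul, map_mul,
          Complex.conj_conj, Complex.conj_ofReal]
        push_cast
        ring
      · -- k = i', l = i'
        simp only [hk', hl', ← hb]
        simp [hne, hne.symm]
        rw [Complex.mul_conj, htC']
        field_simp
        push_cast at hcu ⊢
        linear_combination (t : ℂ) * hcu
      · -- k = i', l other
        have hvl : v l = 0 := hs l hl hl'
        have h1 : k ≠ l := fun h => hl' (h.symm.trans hk')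
        simp [hk', hl, hl', hvl, h1, hne, hne.symm]
      · exact absurd (hl.symm.trans hl') hne
      · -- k other, l = i
        have hvk : v k = 0 := hs k hk hk'
        have h1 : k ≠ l := fun h => hk (h.trans hl)
        simp [hk, hk', hvk, h1, hl]
      · -- k other, l = i'
        have hvk : v k = 0 := hs k hk hk'
        have h1 : k ≠ l := fun h => hk' (h.trans hl')
        simp [hk, hk', hvk, h1, hl']
      · -- both other
        have hvk : v k = 0 := hs k hk hk'
        by_cases hkl : k = l
        · subst hkl; simp [hk, hk', hvk]
        · simp [hk, hk', hkl, hvk]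

private def lo {n : ℕ} (j : Fin (n - 1)) : Fin n := ⟨j, by have := j.isLt; omega⟩
private def hi {n : ℕ} (j : Fin (n - 1)) : Fin n := ⟨(j : ℕ) + 1, by have := j.isLt; omega⟩

private lemma lo_ne_hi {n : ℕ} (j : Fin (n - 1)) : lo j ≠ hi j := by
  simp [lo, hi, Fin.ext_iff]

lemma diag_pushthrough {n : ℕ} (L : List (Fin (n - 1))) (hnd : L.Nodup)
    (c : Fin (n - 1) → ℂ) (s : Fin (n - 1) → ℝ) (d : Fin n → ℂ)
    (hd : ∀ i, ‖d i‖ = 1) :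
    ∃ (c' : Fin (n - 1) → ℂ) (d' : Fin n → ℂ),
      (∀ j, ‖c' j‖ = ‖c j‖) ∧ (∀ i, ‖d' i‖ = 1) ∧
      Matrix.diagonal d * (L.map (fun j => planeRotAt (lo j) (hi j) (c j) (s j))).prod =
        (L.map (fun j => planeRotAt (lo j) (hi j) (c' j) (s j))).prod * Matrix.diagonal d' := by
  induction L generalizing c d with
  | nil => exact ⟨c, d, fun j => rfl, hd, by simp⟩
  | cons j L ih =>
    have hjL : j ∉ L := (List.nodup_cons.mp hnd).1
    have hndL : L.Nodup := (List.nodup_cons.mp hnd).2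
    set c₁ : ℂ := d (lo j) * c j * (starRingEnd ℂ) (d (hi j)) with hc₁
    have hcomm := diag_mul_planeRot (lo j) (hi j) (lo_ne_hi j) (c j) (s j) d
      (hd _) (hd _)
    set d₁ : Fin n → ℂ := fun k => d (Equiv.swap (lo j) (hi j) k) with hd₁
    have hd₁abs : ∀ i, ‖d₁ i‖ = 1 := fun i => hd _
    obtain ⟨c₂, d₂, hc₂abs, hd₂abs, heq⟩ := ih hndL c d₁ hd₁abs
    refine ⟨Function.update c₂ j c₁, d₂, ?_, hd₂abs, ?_⟩
    · intro j'
      by_cases h : j' = j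
      · subst h
        rw [Function.update_self, hc₁, norm_mul, norm_mul, Complex.norm_conj,
          hd _, hd _, one_mul, mul_one]
      · rw [Function.update_of_ne h, hc₂abs]
    · have hmapL : L.map (fun j' => planeRotAt (lo j') (hi j') (Function.update c₂ j c₁ j') (s j')) =
          L.map (fun j' => planeRotAt (lo j') (hi j') (c₂ j') (s j')) := by
        apply List.map_congr_left
        intro x hx
        have hxj : x ≠ j := fun h => hjL (h ▸ hx)
        rw [Function.update_of_ne hxj]
      rw [List.map_cons, List.map_cons, List.prod_cons, List.prod_cons, hmapL,
        Function.update_self, ← mul_assoc, hcomm, mul_assoc, heq, ← mul_assoc]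

lemma prod_refactor {n : ℕ} (v : Fin (n - 1) → Fin n → ℂ)
    (hv : ∀ j, v j ≠ 0)
    (hsupp : ∀ (j : Fin (n - 1)) (k : Fin n), k ≠ lo j → k ≠ hi j → v j k = 0)
    (L : List (Fin (n - 1))) (hnd : L.Nodup)
    (D : Fin n → ℂ) (hD : ∀ i, ‖D i‖ = 1) :
    ∃ (c : Fin (n - 1) → ℂ) (s : Fin (n - 1) → ℝ) (Dt : Fin n → ℂ),
      (∀ j, ‖c j‖ ^ 2 + (s j) ^ 2 = 1) ∧
      (∀ i, ‖Dt i‖ = 1) ∧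
      (L.map (fun j => householder (v j))).prod * Matrix.diagonal D =
        (L.map (fun j => planeRotAt (lo j) (hi j) (c j) (s j))).prod * Matrix.diagonal Dt := by
  induction L with
  | nil => exact ⟨fun _ => 1, fun _ => 0, D, by simp, hD, by simp⟩
  | cons j L ih =>
    have hjL : j ∉ L := (List.nodup_cons.mp hnd).1
    have hndL : L.Nodup := (List.nodup_cons.mp hnd).2
    obtain ⟨c₀, s₀, Dt₀, hcs₀, hDt₀, heq₀⟩ := ih hndL
    obtain ⟨cj, sj, e, hcsj, he, heqj⟩ := householder_factor (lo j) (hi j) (lo_ne_hi j)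
      (v j) (hv j) (hsupp j)
    obtain ⟨c₁, d₁, hc₁abs, hd₁abs, heq₁⟩ := diag_pushthrough L hndL c₀ s₀ e he
    refine ⟨Function.update c₁ j cj, Function.update s₀ j sj, fun i => d₁ i * Dt₀ i,
      ?_, ?_, ?_⟩
    · intro j'
      by_cases h : j' = j
      · subst h; rw [Function.update_self, Function.update_self]; exact hcsj
      · rw [Function.update_of_ne h, Function.update_of_ne h, hc₁abs]; exact hcs₀ j'
    · intro i
      rw [norm_mul, hd₁abs, hDt₀, one_mul]
    · have hmapL : L.map (fun j' => planeRotAt (lo j') (hi j')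
          (Function.update c₁ j cj j') (Function.update s₀ j sj j')) =
          L.map (fun j' => planeRotAt (lo j') (hi j') (c₁ j') (s₀ j')) := by
        apply List.map_congr_left
        intro x hx
        have hxj : x ≠ j := fun h => hjL (h ▸ hx)
        rw [Function.update_of_ne hxj, Function.update_of_ne hxj]
      rw [List.map_cons, List.map_cons, List.prod_cons, List.prod_cons, hmapL,
        Function.update_self, Function.update_self, mul_assoc, heq₀, heqj,
        ← Matrix.diagonal_mul_diagonal]
      rw [mul_assoc, ← mul_assoc (Matrix.diagonal e), heq₁]
      noncomm_ring

/-- Any product `H = P₁ ⋯ P_{n-1} D` of Householder transformations of nonzero vectors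
`v_j` supported on positions `j, j+1`, times a unitary diagonal matrix `D`, can be
refactored as `H = G₁ ⋯ G_{n-1} D̃` where the `G_j` are plane rotations with real sines
acting on indices `j, j+1` and `D̃` is a unitary diagonal matrix. -/
theorem householder_prod_diagonal_refactor (n : ℕ) (hn : 2 ≤ n)
    (v : Fin (n - 1) → (Fin n → ℂ))
    (hv : ∀ j, v j ≠ 0)
    (hsupp : ∀ (j : Fin (n - 1)) (i : Fin n),
      (i : ℕ) ≠ (j : ℕ) → (i : ℕ) ≠ (j : ℕ) + 1 → v j i = 0)
    (D : Fin n → ℂ) (hD : ∀ i, ‖D i‖ = 1)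
    (H : Matrix (Fin n) (Fin n) ℂ)
    (hH : H = ((List.finRange (n - 1)).map (fun j => householder (v j))).prod *
      Matrix.diagonal D) :
    ∃ (c : Fin (n - 1) → ℂ) (s : Fin (n - 1) → ℝ) (Dt : Fin n → ℂ),
      (∀ j, ‖c j‖ ^ 2 + (s j) ^ 2 = 1) ∧
      (∀ i, ‖Dt i‖ = 1) ∧
      H = ((List.finRange (n - 1)).map (fun j : Fin (n - 1) =>
            planeRotAt (⟨(j : ℕ), by have := j.isLt; omega⟩ : Fin n)
              (⟨(j : ℕ) + 1, by have := j.isLt; omega⟩ : Fin n) (c j) (s j))).prod *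
          Matrix.diagonal Dt := by
  obtain ⟨c, s, Dt, h1, h2, h3⟩ := prod_refactor v hv
    (fun j k hk hk' => hsupp j k (fun h => hk (Fin.ext h)) (fun h => hk' (Fin.ext h)))
    (List.finRange (n - 1)) (List.nodup_finRange _) D hD
  exact ⟨c, s, Dt, h1, h2, by rw [hH, h3]; rfl⟩
end

section
/- Let U be any 2×2 complex unitary matrix (U*U = I). Then there exist c ∈ ℂ, s ∈ ℝ with |c|² + s² = 1, and d₁, d₂ ∈ ℂ with |d₁| = |d₂| = 1, such that U = [[c, s], [−s, conj(c)]] · diag(d₁, d₂). -/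
open Complex Matrix

/-- Every `2 × 2` complex unitary matrix factors as a plane rotation with real sine
`[[c, s], [-s, conj c]]` times a unitary diagonal matrix `diag(d₁, d₂)`. -/
theorem unitary_two_eq_planeRot_mul_diagonal (U : Matrix (Fin 2) (Fin 2) ℂ)
    (hU : star U * U = 1) :
    ∃ (c : ℂ) (s : ℝ) (d₁ d₂ : ℂ),
      ‖c‖ ^ 2 + s ^ 2 = 1 ∧ ‖d₁‖ = 1 ∧ ‖d₂‖ = 1 ∧
      U = !![c, (s : ℂ); (-s : ℂ), starRingEnd ℂ c] * Matrix.diagonal ![d₁, d₂] := by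
  have hU' : U * star U = 1 := mul_eq_one_comm.mp hU
  set a := U 0 0 with ha
  set b := U 0 1 with hbdef
  set p := U 1 0 with hpdef
  set q := U 1 1 with hqdef
  have h00 : starRingEnd ℂ a * a + starRingEnd ℂ p * p = 1 := by
    have := congrFun (congrFun hU 0) 0
    simpa [Matrix.mul_apply, Fin.sum_univ_two, Matrix.star_apply, Matrix.one_apply,
      Complex.star_def] using this
  have h11 : starRingEnd ℂ b * b + starRingEnd ℂ q * q = 1 := by
    have := congrFun (congrFun hU 1) 1
    simpa [Matrix.mul_apply, Fin.sum_univ_two, Matrix.star_apply, Matrix.one_apply,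
      Complex.star_def] using this
  have h01 : starRingEnd ℂ a * b + starRingEnd ℂ p * q = 0 := by
    have := congrFun (congrFun hU 0) 1
    simpa [Matrix.mul_apply, Fin.sum_univ_two, Matrix.star_apply, Matrix.one_apply,
      Complex.star_def] using this
  have h11' : p * starRingEnd ℂ p + q * starRingEnd ℂ q = 1 := by
    have := congrFun (congrFun hU' 1) 1
    simpa [Matrix.mul_apply, Fin.sum_univ_two, Matrix.star_apply, Matrix.one_apply,
      Complex.star_def] using this
  have h01c : a * starRingEnd ℂ b + p * starRingEnd ℂ q = 0 := by
    have := congrArg (starRingEnd ℂ) h01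
    simpa [map_add, _root_.map_mul, Complex.conj_conj] using this
  have habs : ‖a‖ ^ 2 + ‖p‖ ^ 2 = 1 := by
    have h1 : (Complex.normSq a : ℂ) + (Complex.normSq p : ℂ) = 1 := by
      rw [← Complex.mul_conj, ← Complex.mul_conj]
      linear_combination h00
    have h2 : Complex.normSq a + Complex.normSq p = 1 := by exact_mod_cast h1
    rw [Complex.sq_norm, Complex.sq_norm]; exact h2
  by_cases hp : p = 0
  · -- p = 0 case
    have haa : starRingEnd ℂ a * a = 1 := by rw [hp] at h00; simpa using h00
    have hane : a ≠ 0 := by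
      intro h; rw [h] at haa; simp at haa
    have hb0 : b = 0 := by
      rw [hp] at h01; simp at h01
      rcases h01 with h | h
      · exact absurd (by simpa using congrArg (starRingEnd ℂ) h) hane
      · exact h
    have hqq : starRingEnd ℂ q * q = 1 := by rw [hb0] at h11; simpa using h11
    refine ⟨1, 0, a, q, by norm_num, ?_, ?_, ?_⟩
    · have h2 : Complex.normSq a = 1 := by
        have h1 : (Complex.normSq a : ℂ) = 1 := by rw [← Complex.mul_conj]; linear_combination haa
        exact_mod_cast h1
      rw [Complex.norm_def, h2, Real.sqrt_one]
    · have h2 : Complex.normSq q = 1 := by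
        have h1 : (Complex.normSq q : ℂ) = 1 := by rw [← Complex.mul_conj]; linear_combination hqq
        exact_mod_cast h1
      rw [Complex.norm_def, h2, Real.sqrt_one]
    · ext i j
      rw [Matrix.mul_diagonal]
      fin_cases i <;> fin_cases j <;>
        simp [← ha, ← hbdef, ← hpdef, ← hqdef, hb0, hp]
  · -- p ≠ 0 case
    set Δ := a * q - b * p with hΔdef
    have hq2 : q = Δ * starRingEnd ℂ a := by
      rw [hΔdef]; linear_combination (-q) * h00 + p * h01
    have hb2 : b = -(Δ * starRingEnd ℂ p) := by
      rw [hΔdef]; linear_combination (-b) * h00 + a * h01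
    have hΔ1 : Δ * (starRingEnd ℂ a * starRingEnd ℂ q - starRingEnd ℂ b * starRingEnd ℂ p) = 1 := by
      rw [hΔdef]
      linear_combination (q * starRingEnd ℂ q) * h00 + (p * starRingEnd ℂ p) * h11
        - (q * starRingEnd ℂ p) * h01c - (p * starRingEnd ℂ q) * h01 + h11'
    have hΔstar : starRingEnd ℂ Δ = starRingEnd ℂ a * starRingEnd ℂ q
        - starRingEnd ℂ b * starRingEnd ℂ p := by
      rw [hΔdef]; simp [map_sub, _root_.map_mul]
    have hΔabs : ‖Δ‖ = 1 := by
      have h1 : (Complex.normSq Δ : ℂ) = 1 := by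
        rw [← Complex.mul_conj, hΔstar]; exact hΔ1
      have h2 : Complex.normSq Δ = 1 := by exact_mod_cast h1
      rw [Complex.norm_def, h2, Real.sqrt_one]
    set s : ℝ := ‖p‖ with hs
    have hs0 : 0 < s := by
      rw [hs]; exact norm_pos_iff.mpr hp
    have hsne : (s : ℂ) ≠ 0 := by exact_mod_cast hs0.ne'
    have hps : starRingEnd ℂ p * p = (s : ℂ) ^ 2 := by
      have h1 : p * (starRingEnd ℂ) p = (Complex.normSq p : ℂ) := Complex.mul_conj p
      rw [show ((s : ℝ) : ℂ) ^ 2 = ((s ^ 2 : ℝ) : ℂ) by push_cast; ring]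
      rw [hs, Complex.sq_norm]
      linear_combination h1
    refine ⟨-(a * starRingEnd ℂ p) / s, s, -p / s, -(Δ * starRingEnd ℂ p) / s, ?_, ?_, ?_, ?_⟩
    · have hc : ‖(-(a * starRingEnd ℂ p) / s)‖ = ‖a‖ := by
        rw [norm_div, norm_neg, norm_mul, Complex.norm_conj]
        simp only [Complex.norm_real, Real.norm_eq_abs]
        rw [abs_of_pos hs0, ← hs]
        field_simp
      rw [hc]; exact habs
    · rw [norm_div, norm_neg]
      simp only [Complex.norm_real, Real.norm_eq_abs]
      rw [abs_of_pos hs0, hs]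
      field_simp
    · rw [norm_div, norm_neg, norm_mul, Complex.norm_conj]
      simp only [Complex.norm_real, Real.norm_eq_abs]
      rw [abs_of_pos hs0, hΔabs, hs]
      field_simp
    · ext i j
      rw [Matrix.mul_diagonal]
      fin_cases i <;> fin_cases j <;>
        simp only [Fin.zero_eta, Fin.mk_one, ← ha, ← hbdef, ← hpdef, ← hqdef, Matrix.cons_val', Matrix.cons_val_zero,
          Matrix.cons_val_one, Matrix.head_cons, Matrix.head_fin_const, Matrix.empty_val',
          Matrix.cons_val_fin_one, Matrix.of_apply, Fin.isValue]
      · -- (0,0)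
        field_simp
        linear_combination (-a) * hps
      · -- (0,1)
        field_simp
        linear_combination hb2
      · -- (1,0)
        field_simp
      · -- (1,1)
        rw [map_div₀, map_neg, _root_.map_mul, Complex.conj_conj,
          show (starRingEnd ℂ) ((s : ℝ) : ℂ) = ((s : ℝ) : ℂ) from Complex.conj_ofReal s]
        field_simp
        linear_combination ((s:ℝ):ℂ)^2 * hq2 - (Δ * starRingEnd ℂ a) * hps
end

section
/- Let G = [[c, s], [−s, conj(c)]] be a 2×2 plane rotation with real sine (c ∈ ℂ, s ∈ ℝ, |c|² + s² = 1) and let D = diag(d₁, d₂) with |d₁| = |d₂| = 1. Then there exist a diagonal matrix D̃ = diag(d̃₁, d̃₂) with |d̃₁| = |d̃₂| = 1 and a plane rotation with real sine G̃ = [[c̃, s̃], [−s̃, conj(c̃)]] (c̃ ∈ ℂ, s̃ ∈ ℝ, |c̃|² + s̃² = 1) such that G·D = D̃·G̃. -/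
/-- A plane rotation with real sine times a unitary diagonal matrix can be refactored,
swapping the order: `G D = D̃ G̃` with `D̃` unitary diagonal and `G̃` a plane rotation
with real sine. -/
theorem planeRot_mul_diagonal_swap (c : ℂ) (s : ℝ)
    (h : ‖c‖ ^ 2 + s ^ 2 = 1)
    (d₁ d₂ : ℂ) (h₁ : ‖d₁‖ = 1) (h₂ : ‖d₂‖ = 1) :
    ∃ (dt₁ dt₂ ct : ℂ) (st : ℝ),
      ‖dt₁‖ = 1 ∧ ‖dt₂‖ = 1 ∧
      ‖ct‖ ^ 2 + st ^ 2 = 1 ∧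
      !![c, (s : ℂ); (-s : ℂ), starRingEnd ℂ c] * Matrix.diagonal ![d₁, d₂] =
        Matrix.diagonal ![dt₁, dt₂] * !![ct, (st : ℂ); (-st : ℂ), starRingEnd ℂ ct] := by
  refine ⟨d₂, d₁, c * d₁ * starRingEnd ℂ d₂, s, h₂, h₁, ?_, ?_⟩
  · simp [map_mul, Complex.norm_conj, h₁, h₂, h]
  · have e₁ : d₁ * starRingEnd ℂ d₁ = 1 := by
      rw [Complex.mul_conj, ← Complex.sq_norm, h₁]; norm_num
    have e₂ : d₂ * starRingEnd ℂ d₂ = 1 := by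
      rw [Complex.mul_conj, ← Complex.sq_norm, h₂]; norm_num
    ext i j
    fin_cases i <;> fin_cases j <;>
      simp [Matrix.mul_apply, Fin.sum_univ_two, map_mul] <;> ring_nf <;>
      first
        | linear_combination (-(c * d₁)) * e₂
        | linear_combination (c * d₁) * e₂
        | linear_combination (-(starRingEnd ℂ c * d₂)) * e₁
end

section
/- For 3×3 complex matrices, let G₁ and K₁ be plane rotations with real sines acting on indices (1,2), and let J₂ be a plane rotation with real sine acting on indices (2,3). Then there exist plane rotations with real sines G̃₂ and K̃₂ acting on indices (2,3) and J̃₁ acting on indices (1,2) such that G₁ · J₂ · K₁ = G̃₂ · J̃₁ · K̃₂ (the turnover operation). -/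
/-- Auxiliary: the matrix identity of the turnover reduces to nine scalar identities. -/
lemma turnover_aux (c₁ c₂ c₃ a₁ a₂ a₃ : ℂ) (s₁ s₂ s₃ b₁ b₂ b₃ : ℝ)
    (e00 : c₁ * c₃ - (s₁ : ℂ) * c₂ * s₃ = a₂)
    (e01 : c₁ * (s₃ : ℂ) + (s₁ : ℂ) * c₂ * starRingEnd ℂ c₃ = (b₂ : ℂ) * a₃)
    (e02 : ((s₁ : ℂ)) * s₂ = (b₂ : ℂ) * b₃)
    (e10 : -((s₁ : ℂ) * c₃) - starRingEnd ℂ c₁ * c₂ * s₃ = -(a₁ * b₂))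
    (e11 : -((s₁ : ℂ) * s₃) + starRingEnd ℂ c₁ * c₂ * starRingEnd ℂ c₃ =
      a₁ * starRingEnd ℂ a₂ * a₃ - (b₁ : ℂ) * b₃)
    (e12 : starRingEnd ℂ c₁ * (s₂ : ℂ) =
      a₁ * starRingEnd ℂ a₂ * b₃ + (b₁ : ℂ) * starRingEnd ℂ a₃)
    (e20 : ((s₂ : ℂ)) * s₃ = (b₁ : ℂ) * b₂)
    (e21 : -((s₂ : ℂ) * starRingEnd ℂ c₃) =
      -((b₁ : ℂ) * starRingEnd ℂ a₂ * a₃) - starRingEnd ℂ a₁ * b₃)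
    (e22 : starRingEnd ℂ c₂ =
      -((b₁ : ℂ) * starRingEnd ℂ a₂ * b₃) + starRingEnd ℂ a₁ * starRingEnd ℂ a₃) :
    planeRotAt (0 : Fin 3) 1 c₁ s₁ * planeRotAt (1 : Fin 3) 2 c₂ s₂ *
          planeRotAt (0 : Fin 3) 1 c₃ s₃ =
        planeRotAt (1 : Fin 3) 2 a₁ b₁ * planeRotAt (0 : Fin 3) 1 a₂ b₂ *
          planeRotAt (1 : Fin 3) 2 a₃ b₃ := by
  ext i j
  fin_cases i <;> fin_cases j <;>
    simp [planeRotAt, Matrix.mul_apply, Fin.sum_univ_three] <;>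
    first
      | linear_combination e00
      | linear_combination e01
      | linear_combination e02
      | linear_combination e10
      | linear_combination e11
      | linear_combination e12
      | linear_combination e20
      | linear_combination e21
      | linear_combination e22

set_option maxHeartbeats 1000000 in
/-- The turnover operation: for `3 × 3` matrices, a product `G₁ J₂ K₁` with `G₁, K₁`
plane rotations with real sines acting on indices `(1,2)` and `J₂` a plane rotation
with real sine acting on indices `(2,3)` can be refactored as `G̃₂ J̃₁ K̃₂` with
`G̃₂, K̃₂` acting on `(2,3)` and `J̃₁` acting on `(1,2)`. -/
theorem planeRot_turnover
    (c₁ : ℂ) (s₁ : ℝ) (h₁ : ‖c₁‖ ^ 2 + s₁ ^ 2 = 1)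
    (c₂ : ℂ) (s₂ : ℝ) (h₂ : ‖c₂‖ ^ 2 + s₂ ^ 2 = 1)
    (c₃ : ℂ) (s₃ : ℝ) (h₃ : ‖c₃‖ ^ 2 + s₃ ^ 2 = 1) :
    ∃ (a₁ : ℂ) (b₁ : ℝ) (a₂ : ℂ) (b₂ : ℝ) (a₃ : ℂ) (b₃ : ℝ),
      ‖a₁‖ ^ 2 + b₁ ^ 2 = 1 ∧
      ‖a₂‖ ^ 2 + b₂ ^ 2 = 1 ∧
      ‖a₃‖ ^ 2 + b₃ ^ 2 = 1 ∧
      planeRotAt (0 : Fin 3) 1 c₁ s₁ * planeRotAt (1 : Fin 3) 2 c₂ s₂ *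
          planeRotAt (0 : Fin 3) 1 c₃ s₃ =
        planeRotAt (1 : Fin 3) 2 a₁ b₁ * planeRotAt (0 : Fin 3) 1 a₂ b₂ *
          planeRotAt (1 : Fin 3) 2 a₃ b₃ := by
  have sqabs : ∀ z : ℂ, ((‖z‖ : ℝ) : ℂ) ^ 2 = z * starRingEnd ℂ z := by
    intro z
    rw [← Complex.ofReal_pow, Complex.sq_norm]
    exact (Complex.mul_conj z).symm
  have hc1 : c₁ * starRingEnd ℂ c₁ = 1 - (s₁ : ℂ) ^ 2 := by
    rw [← sqabs, ← Complex.ofReal_pow,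
      show ‖c₁‖ ^ 2 = 1 - s₁ ^ 2 by linarith]
    push_cast; ring
  have hc2 : c₂ * starRingEnd ℂ c₂ = 1 - (s₂ : ℂ) ^ 2 := by
    rw [← sqabs, ← Complex.ofReal_pow,
      show ‖c₂‖ ^ 2 = 1 - s₂ ^ 2 by linarith]
    push_cast; ring
  have hc3 : c₃ * starRingEnd ℂ c₃ = 1 - (s₃ : ℂ) ^ 2 := by
    rw [← sqabs, ← Complex.ofReal_pow,
      show ‖c₃‖ ^ 2 = 1 - s₃ ^ 2 by linarith]
    push_cast; ring
  have hA : ‖c₁ * c₃ - (s₁:ℂ) * c₂ * s₃‖ ^ 2 +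
      (‖-((s₁:ℂ) * c₃) - starRingEnd ℂ c₁ * c₂ * s₃‖ ^ 2
        + (s₂ * s₃) ^ 2) = 1 := by
    rw [← Complex.ofReal_inj]
    push_cast [sqabs]
    simp only [map_mul, map_sub, map_add, map_neg, Complex.conj_conj,
      Complex.conj_ofReal]
    linear_combination (c₃ * starRingEnd ℂ c₃ +
        c₂ * starRingEnd ℂ c₂ * (s₃:ℂ) ^ 2) * hc1 + ((s₃:ℂ) ^ 2) * hc2 + hc3
  by_cases hdeg : ‖-((s₁:ℂ) * c₃) - starRingEnd ℂ c₁ * c₂ * s₃‖ ^ 2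
      + (s₂ * s₃) ^ 2 = 0
  · -- degenerate case
    have habs : ‖-((s₁:ℂ) * c₃) - starRingEnd ℂ c₁ * c₂ * s₃‖ = 0 := by
      nlinarith [sq_nonneg (s₂ * s₃),
        norm_nonneg (-((s₁:ℂ) * c₃) - starRingEnd ℂ c₁ * c₂ * s₃)]
    have h10 : -((s₁:ℂ) * c₃) - starRingEnd ℂ c₁ * c₂ * s₃ = 0 :=
      norm_eq_zero.mp habs
    have h23 : s₂ * s₃ = 0 := by
      nlinarith [norm_nonneg (-((s₁:ℂ) * c₃) - starRingEnd ℂ c₁ * c₂ * s₃)]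
    by_cases hs3 : s₃ = 0
    · subst hs3
      have hc3ne : c₃ ≠ 0 := by
        intro h; rw [h] at h₃; simp at h₃
      have hs1 : s₁ = 0 := by
        have h' : (s₁ : ℂ) * c₃ = 0 := by simpa using h10
        rcases mul_eq_zero.mp h' with h | h
        · exact_mod_cast h
        · exact absurd h hc3ne
      subst hs1
      push_cast at hc1 hc2 hc3
      refine ⟨c₃, 0, c₁ * c₃, 0, c₂ * starRingEnd ℂ c₃, s₂, ?_, ?_, ?_, ?_⟩
      · simpa using h₃
      · simp only [norm_mul]; nlinarith [norm_nonneg c₁, norm_nonneg c₃]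
      · simp only [norm_mul, Complex.norm_conj]
        nlinarith [norm_nonneg c₂, norm_nonneg c₃]
      · apply turnover_aux <;>
          (try simp only [map_mul, map_sub, map_add, map_neg, Complex.conj_conj,
            Complex.conj_ofReal]) <;> (try push_cast) <;>
          first
            | ring1
            | linear_combination (-(c₂ * starRingEnd ℂ c₁ * starRingEnd ℂ c₃)) * hc3
            | linear_combination (-(starRingEnd ℂ c₁ * (s₂:ℂ))) * hc3
            | linear_combination (-(starRingEnd ℂ c₂)) * hc3
    · have hs2 : s₂ = 0 := by
        rcases mul_eq_zero.mp h23 with h | h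
        · exact h
        · exact absurd h hs3
      subst hs2
      push_cast at hc1 hc2 hc3
      have hn10 : -((s₁:ℂ) * starRingEnd ℂ c₃) - c₁ * starRingEnd ℂ c₂ * s₃ = 0 := by
        have := congrArg (starRingEnd ℂ) h10
        simpa [map_mul, Complex.conj_ofReal] using this
      have hA' : ‖c₁ * c₃ - (s₁:ℂ) * c₂ * s₃‖ ^ 2 = 1 := by
        have h0 : ‖-((s₁:ℂ) * c₃) - starRingEnd ℂ c₁ * c₂ * s₃‖ ^ 2
            + (0 * s₃ : ℝ) ^ 2 = 0 := hdeg
        linarith [hA]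
      refine ⟨c₂, 0, c₁ * c₃ - (s₁:ℂ) * c₂ * s₃, 0, 1, 0, ?_, ?_, ?_, ?_⟩
      · simpa using h₂
      · simpa using hA'
      · simp
      · apply turnover_aux <;>
          (try simp only [map_mul, map_sub, map_add, map_neg, map_one, Complex.conj_conj,
            Complex.conj_ofReal]) <;> (try push_cast) <;>
          first
            | ring1
            | linear_combination h10
            | linear_combination (-c₂) * hn10 - (c₁ * (s₃:ℂ)) * hc2
            | linear_combination ((s₁:ℂ) * (s₃:ℂ)) * hc2
  · -- main case
    have hRpos : 0 < ‖-((s₁:ℂ) * c₃) - starRingEnd ℂ c₁ * c₂ * s₃‖ ^ 2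
        + (s₂ * s₃) ^ 2 := lt_of_le_of_ne (by positivity) (Ne.symm hdeg)
    obtain ⟨r, hr0, hr2⟩ : ∃ r : ℝ, 0 < r ∧
        r ^ 2 = ‖-((s₁:ℂ) * c₃) - starRingEnd ℂ c₁ * c₂ * s₃‖ ^ 2
          + (s₂ * s₃) ^ 2 :=
      ⟨Real.sqrt _, Real.sqrt_pos.mpr hRpos, Real.sq_sqrt hRpos.le⟩
    have hrne : ((r:ℂ)) ≠ 0 := Complex.ofReal_ne_zero.mpr (ne_of_gt hr0)
    have hr2C : ((r : ℂ)) ^ 2 =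
        (-((s₁:ℂ) * c₃) - starRingEnd ℂ c₁ * c₂ * s₃) *
          (-((s₁:ℂ) * starRingEnd ℂ c₃) - c₁ * starRingEnd ℂ c₂ * s₃) +
          ((s₂:ℂ) * s₃) ^ 2 := by
      rw [← Complex.ofReal_pow, hr2]
      push_cast [sqabs]
      simp only [map_mul, map_sub, map_add, map_neg, Complex.conj_conj,
        Complex.conj_ofReal]
      try ring
    have hB : ‖c₁ * (s₃:ℂ) + (s₁:ℂ) * c₂ * starRingEnd ℂ c₃‖ ^ 2
        + (s₁ * s₂) ^ 2 =
        ‖-((s₁:ℂ) * c₃) - starRingEnd ℂ c₁ * c₂ * s₃‖ ^ 2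
          + (s₂ * s₃) ^ 2 := by
      rw [← Complex.ofReal_inj]
      push_cast [sqabs]
      simp only [map_mul, map_sub, map_add, map_neg, Complex.conj_conj,
        Complex.conj_ofReal]
      linear_combination ((s₃:ℂ)^2 - c₂ * starRingEnd ℂ c₂ * (s₃:ℂ)^2) * hc1 +
        (-(s₃:ℂ)^2 + (s₁:ℂ)^2 * (s₃:ℂ)^2 +
          c₃ * starRingEnd ℂ c₃ * (s₁:ℂ)^2) * hc2 +
        (-((s₁:ℂ)^2 * (s₂:ℂ)^2)) * hc3
    refine ⟨-(-((s₁:ℂ) * c₃) - starRingEnd ℂ c₁ * c₂ * s₃) / r, s₂ * s₃ / r,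
      c₁ * c₃ - (s₁:ℂ) * c₂ * s₃, r,
      (c₁ * (s₃:ℂ) + (s₁:ℂ) * c₂ * starRingEnd ℂ c₃) / r, s₁ * s₂ / r,
      ?_, ?_, ?_, ?_⟩
    · rw [neg_div, norm_neg, norm_div, Complex.norm_real, Real.norm_eq_abs,
        abs_of_pos hr0, div_pow, div_pow, ← add_div, hr2]
      exact div_self hdeg
    · nlinarith [hA, hr2]
    · rw [norm_div, Complex.norm_real, Real.norm_eq_abs, abs_of_pos hr0, div_pow, div_pow,
        ← add_div, hB, hr2]
      exact div_self hdeg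
    · apply turnover_aux
      · ring
      · push_cast
        field_simp
        try ring1
      · push_cast
        field_simp
        try ring1
      · push_cast
        field_simp
        try ring1
      · -- e11
        simp only [map_mul, map_sub, map_add, map_neg, map_div₀, Complex.conj_conj,
          Complex.conj_ofReal]
        push_cast
        field_simp
        linear_combination (-((s₁:ℂ) * s₃) + starRingEnd ℂ c₁ * c₂ * starRingEnd ℂ c₃) * hr2C
          - (c₃ * starRingEnd ℂ c₃ * (s₁:ℂ) * s₃
            + c₂ * starRingEnd ℂ c₁ * starRingEnd ℂ c₃ * (s₃:ℂ)^2
            - c₂ * c₃ * starRingEnd ℂ c₂ * starRingEnd ℂ c₃ * (s₁:ℂ) * s₃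
            - c₂^2 * starRingEnd ℂ c₁ * starRingEnd ℂ c₂ * starRingEnd ℂ c₃ * (s₃:ℂ)^2) * hc1
          - (-(c₃ * starRingEnd ℂ c₃ * (s₁:ℂ) * s₃)
            - c₂ * starRingEnd ℂ c₁ * starRingEnd ℂ c₃ * (s₃:ℂ)^2) * hc2
          - ((s₁:ℂ) * (s₂:ℂ)^2 * s₃) * hc3
      · -- e12
        simp only [map_mul, map_sub, map_add, map_neg, map_div₀, Complex.conj_conj,
          Complex.conj_ofReal]
        push_cast
        field_simp
        linear_combination (starRingEnd ℂ c₁ * (s₂:ℂ)) * hr2C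
          - (-(c₃ * starRingEnd ℂ c₂ * (s₁:ℂ) * s₂ * s₃)
            - c₂ * starRingEnd ℂ c₁ * starRingEnd ℂ c₂ * (s₂:ℂ) * (s₃:ℂ)^2) * hc1
          - (-(starRingEnd ℂ c₁ * (s₂:ℂ) * (s₃:ℂ)^2)) * hc2
      · push_cast
        field_simp
        try ring1
      · -- e21
        simp only [map_mul, map_sub, map_add, map_neg, map_div₀, Complex.conj_conj,
          Complex.conj_ofReal]
        push_cast
        field_simp
        linear_combination ((-((s₂:ℂ) * starRingEnd ℂ c₃)) * hr2C
          - (-(starRingEnd ℂ c₃ * (s₂:ℂ) * (s₃:ℂ)^2)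
            + c₂ * starRingEnd ℂ c₂ * starRingEnd ℂ c₃ * (s₂:ℂ) * (s₃:ℂ)^2) * hc1
          - (starRingEnd ℂ c₃ * (s₂:ℂ) * (s₃:ℂ)^2) * hc2
          - (starRingEnd ℂ c₃ * (s₁:ℂ)^2 * s₂
            + c₁ * starRingEnd ℂ c₂ * (s₁:ℂ) * s₂ * s₃) * hc3)
      · -- e22
        simp only [map_mul, map_sub, map_add, map_neg, map_div₀, Complex.conj_conj,
          Complex.conj_ofReal]
        push_cast
        field_simp
        linear_combination ((starRingEnd ℂ c₂) * hr2C
          - (starRingEnd ℂ c₂ * (s₃:ℂ)^2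
            - c₂ * (starRingEnd ℂ c₂)^2 * (s₃:ℂ)^2) * hc1
          - (-(starRingEnd ℂ c₂ * (s₃:ℂ)^2) + starRingEnd ℂ c₂ * (s₁:ℂ)^2 * (s₃:ℂ)^2
            - starRingEnd ℂ c₁ * starRingEnd ℂ c₃ * (s₁:ℂ) * s₃) * hc2)
end

section
/- Let n ≥ 2, let R be an n×n complex upper triangular matrix, and let G be a unitary core transformation acting on indices (i, i+1) for some 1 ≤ i ≤ n−1, i.e. G equals the identity except for a 2×2 unitary block in rows/columns i and i+1. Then there exist a unitary core transformation G̃ acting on the same indices (i, i+1) and an upper triangular matrix R̃ such that R·G = G̃·R̃ (the passthrough operation). -/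
set_option maxHeartbeats 1000000


/-- The passthrough operation: if `R` is upper triangular and `G` is a unitary core
transformation acting on indices `(i, i+1)` (i.e. `G` is unitary and equal to the
identity outside the `2 × 2` principal block in rows/columns `i, i+1`), then there are
a unitary core transformation `G̃` acting on the same indices and an upper triangular
matrix `R̃` with `R G = G̃ R̃`. -/
theorem core_passthrough (n : ℕ) (hn : 2 ≤ n)
    (R : Matrix (Fin n) (Fin n) ℂ)
    (hR : ∀ i j : Fin n, (j : ℕ) < (i : ℕ) → R i j = 0)
    (i : Fin n) (hi : (i : ℕ) + 1 < n)
    (G : Matrix (Fin n) (Fin n) ℂ)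
    (hGu : star G * G = 1)
    (hG : ∀ k l : Fin n,
      ¬(((k : ℕ) = (i : ℕ) ∨ (k : ℕ) = (i : ℕ) + 1) ∧
        ((l : ℕ) = (i : ℕ) ∨ (l : ℕ) = (i : ℕ) + 1)) →
      G k l = if k = l then 1 else 0) :
    ∃ (Gt Rt : Matrix (Fin n) (Fin n) ℂ),
      star Gt * Gt = 1 ∧
      (∀ k l : Fin n,
        ¬(((k : ℕ) = (i : ℕ) ∨ (k : ℕ) = (i : ℕ) + 1) ∧
          ((l : ℕ) = (i : ℕ) ∨ (l : ℕ) = (i : ℕ) + 1)) →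
        Gt k l = if k = l then 1 else 0) ∧
      (∀ i' j' : Fin n, (j' : ℕ) < (i' : ℕ) → Rt i' j' = 0) ∧
      R * G = Gt * Rt := by
  classical
  set i1 : Fin n := ⟨(i : ℕ) + 1, hi⟩ with hi1def
  have hi1val : (i1 : ℕ) = (i : ℕ) + 1 := rfl
  have hii1 : i ≠ i1 := by
    intro h
    have := congrArg Fin.val h
    omega
  have hvi : ∀ k : Fin n, k = i ↔ (k : ℕ) = (i : ℕ) := fun k => Fin.ext_iff
  have hvi1 : ∀ k : Fin n, k = i1 ↔ (k : ℕ) = (i : ℕ) + 1 := fun k => Fin.ext_iff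
  -- G rows/columns outside the block
  have hGrow : ∀ m l : Fin n, (m : ℕ) ≠ (i : ℕ) → (m : ℕ) ≠ (i : ℕ) + 1 →
      G m l = if m = l then 1 else 0 := by
    intro m l h1 h2
    exact hG m l (by tauto)
  have hGcol : ∀ m l : Fin n, (l : ℕ) ≠ (i : ℕ) → (l : ℕ) ≠ (i : ℕ) + 1 →
      G m l = if m = l then 1 else 0 := by
    intro m l h1 h2
    exact hG m l (by tauto)
  set M : Matrix (Fin n) (Fin n) ℂ := R * G with hMdef
  -- M is upper triangular except possibly at (i1, i)
  have hM0 : ∀ k l : Fin n, (l : ℕ) < (k : ℕ) → ¬(k = i1 ∧ l = i) → M k l = 0 := by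
    intro k l hlk hne
    rw [hMdef, Matrix.mul_apply]
    apply Finset.sum_eq_zero
    intro m _
    by_cases hl1 : (l : ℕ) = (i : ℕ)
    · have hli : l = i := (hvi l).mpr hl1
      have hki1 : k ≠ i1 := fun h => hne ⟨h, hli⟩
      have hk2 : (i : ℕ) + 1 < (k : ℕ) := by
        have : (k : ℕ) ≠ (i : ℕ) + 1 := fun h => hki1 ((hvi1 k).mpr h)
        omega
      by_cases hmi : (m : ℕ) = (i : ℕ)
      · have : R k m = 0 := hR k m (by omega)
        simp [this]
      · by_cases hmi1 : (m : ℕ) = (i : ℕ) + 1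
        · have : R k m = 0 := hR k m (by omega)
          simp [this]
        · rw [hGrow m l hmi hmi1]
          have : m ≠ l := fun h => hmi (by rw [h, hli])
          simp [this]
    · by_cases hl2 : (l : ℕ) = (i : ℕ) + 1
      · by_cases hmi : (m : ℕ) = (i : ℕ)
        · have : R k m = 0 := hR k m (by omega)
          simp [this]
        · by_cases hmi1 : (m : ℕ) = (i : ℕ) + 1
          · have : R k m = 0 := hR k m (by omega)
            simp [this]
          · rw [hGrow m l hmi hmi1]
            have : m ≠ l := fun h => hmi1 (by rw [h]; exact hl2)
            simp [this]
      · rw [hGcol m l hl1 hl2]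
        by_cases hml : m = l
        · subst hml
          have : R k m = 0 := hR k m hlk
          simp [this]
        · simp [hml]
  -- sums of functions supported on {i, i1}
  have hsum2 : ∀ f : Fin n → ℂ, (∀ m, m ≠ i → m ≠ i1 → f m = 0) →
      ∑ m, f m = f i + f i1 := by
    intro f hf
    have hpt : ∀ m : Fin n,
        f m = (if m = i then f i else 0) + (if m = i1 then f i1 else 0) := by
      intro m
      by_cases h1 : m = i
      · subst h1
        simp [hii1]
      · by_cases h2 : m = i1
        · subst h2
          simp [Ne.symm hii1]
        · simp [h1, h2, hf m h1 h2]
    rw [Finset.sum_congr rfl fun m _ => hpt m, Finset.sum_add_distrib]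
    simp
  by_cases hb : M i1 i = 0
  · -- already upper triangular: take Gt = 1
    refine ⟨1, M, by simp, ?_, ?_, by simp [hMdef]⟩
    · intro k l _
      simp [Matrix.one_apply]
    · intro k l h
      by_cases hk : k = i1 ∧ l = i
      · rw [hk.1, hk.2]; exact hb
      · exact hM0 k l h hk
  · -- Givens rotation
    set a : ℂ := M i i with hadef
    set b : ℂ := M i1 i with hbdef
    set r : ℝ := Real.sqrt (Complex.normSq a + Complex.normSq b) with hrdef
    have hrpos : 0 < r := by
      apply Real.sqrt_pos.mpr
      have hb' : 0 < Complex.normSq b := Complex.normSq_pos.mpr hb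
      have := Complex.normSq_nonneg a
      linarith
    have hrne : (r : ℂ) ≠ 0 := by
      exact_mod_cast ne_of_gt hrpos
    have hr2 : r ^ 2 = Complex.normSq a + Complex.normSq b := by
      rw [hrdef]
      exact Real.sq_sqrt (add_nonneg (Complex.normSq_nonneg a) (Complex.normSq_nonneg b))
    set c : ℂ := a / (r : ℂ) with hcdef
    set s : ℂ := b / (r : ℂ) with hsdef
    have hr2c : ((Complex.normSq a : ℝ) : ℂ) + ((Complex.normSq b : ℝ) : ℂ) =
        (r : ℂ) * (r : ℂ) := by
      have h := congrArg (fun x : ℝ => (x : ℂ)) hr2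
      push_cast at h
      rw [← h]
      ring
    have hnormc : star c * c + star s * s = 1 := by
      have hca : star c * c = ((Complex.normSq a : ℝ) : ℂ) / ((r : ℂ) * (r : ℂ)) := by
        rw [hcdef]
        simp only [Complex.star_def, map_div₀, Complex.conj_ofReal]
        rw [div_mul_div_comm, Complex.normSq_eq_conj_mul_self]
      have hsb : star s * s = ((Complex.normSq b : ℝ) : ℂ) / ((r : ℂ) * (r : ℂ)) := by
        rw [hsdef]
        simp only [Complex.star_def, map_div₀, Complex.conj_ofReal]
        rw [div_mul_div_comm, Complex.normSq_eq_conj_mul_self]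
      rw [hca, hsb, ← add_div, hr2c,
        div_self (mul_ne_zero hrne hrne)]
    have helim : -s * a + c * b = 0 := by
      rw [hcdef, hsdef]
      field_simp
      ring
    set Gt : Matrix (Fin n) (Fin n) ℂ := fun k l =>
      if k = i ∧ l = i then c
      else if k = i ∧ l = i1 then -(star s)
      else if k = i1 ∧ l = i then s
      else if k = i1 ∧ l = i1 then star c
      else if k = l then 1 else 0 with hGtdef
    have hGtii : Gt i i = c := by simp [hGtdef]
    have hGtii1 : Gt i i1 = -(star s) := by simp [hGtdef, hii1, Ne.symm hii1]
    have hGti1i : Gt i1 i = s := by simp [hGtdef, hii1, Ne.symm hii1]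
    have hGti1i1 : Gt i1 i1 = star c := by simp [hGtdef, hii1, Ne.symm hii1]
    have hGtoff : ∀ m l : Fin n, m ≠ i → m ≠ i1 → Gt m l = if m = l then 1 else 0 := by
      intro m l h1 h2
      simp [hGtdef, h1, h2]
    have hGtcol : ∀ m l : Fin n, l ≠ i → l ≠ i1 → Gt m l = if m = l then 1 else 0 := by
      intro m l h1 h2
      simp [hGtdef, h1, h2]
    -- unitarity
    have hGtu : star Gt * Gt = 1 := by
      ext k l
      rw [Matrix.mul_apply, Matrix.one_apply]
      simp only [Matrix.star_apply]
      by_cases hk : k = i ∨ k = i1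
      · by_cases hl : l = i ∨ l = i1
        · rw [hsum2 _ (by
            intro m h1 h2
            rw [hGtoff m k h1 h2]
            have : m ≠ k := by
              rcases hk with h | h <;> rw [h] <;> assumption
            simp [this])]
          rcases hk with hk | hk <;> rcases hl with hl | hl <;> subst hk <;> subst hl
          · rw [if_pos rfl, hGtii, hGti1i]
            exact hnormc
          · rw [if_neg hii1, hGtii, hGtii1, hGti1i, hGti1i1]
            ring
          · rw [if_neg (Ne.symm hii1), hGtii, hGtii1, hGti1i, hGti1i1]
            simp only [star_neg, star_star]
            ring
          · rw [if_pos rfl, hGtii1, hGti1i1]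
            simp only [star_neg, star_star]
            linear_combination hnormc
        · push_neg at hl
          have hkl : ¬ k = l := by
            rcases hk with h | h <;> subst h
            · exact fun h' => hl.1 h'.symm
            · exact fun h' => hl.2 h'.symm
          rw [if_neg hkl]
          apply Finset.sum_eq_zero
          intro m _
          by_cases h1 : m = i
          · rw [hGtcol m l hl.1 hl.2]
            have : m ≠ l := by subst h1; intro h'; exact hl.1 h'.symm
            simp [this]
          · by_cases h2 : m = i1
            · rw [hGtcol m l hl.1 hl.2]
              have : m ≠ l := by subst h2; intro h'; exact hl.2 h'.symm
              simp [this]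
            · rw [hGtoff m k h1 h2]
              have : m ≠ k := by
                rcases hk with h | h <;> rw [h] <;> assumption
              simp [this]
      · push_neg at hk
        rw [Finset.sum_eq_single k]
        · rw [hGtoff k k hk.1 hk.2, hGtoff k l hk.1 hk.2]
          simp
        · intro m _ hm
          rw [hGtcol m k hk.1 hk.2, if_neg hm]
          simp
        · intro h
          exact absurd (Finset.mem_univ k) h
    refine ⟨Gt, star Gt * M, hGtu, ?_, ?_, ?_⟩
    · -- block structure of Gt
      intro k l hnot
      simp only [← hvi k, ← hvi1 k, ← hvi l, ← hvi1 l] at hnot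
      have h : (k ≠ i ∧ k ≠ i1) ∨ (l ≠ i ∧ l ≠ i1) := by tauto
      rcases h with ⟨h1, h2⟩ | ⟨h1, h2⟩
      · exact hGtoff k l h1 h2
      · exact hGtcol k l h1 h2
    · -- Rt is upper triangular
      intro k l hlk
      rw [Matrix.mul_apply]
      simp only [Matrix.star_apply]
      by_cases hk1 : k = i
      · rw [hk1] at hlk ⊢
        apply Finset.sum_eq_zero
        intro m _
        by_cases h1 : m = i
        · rw [h1, hM0 i l hlk (fun h => hii1 h.1)]
          simp
        · by_cases h2 : m = i1
          · have hli : l ≠ i := by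
              intro h
              rw [h] at hlk
              omega
            rw [h2, hM0 i1 l (by omega) (fun h => hli h.2)]
            simp
          · rw [hGtoff m i h1 h2, if_neg h1]
            simp
      · by_cases hk2 : k = i1
        · rw [hk2] at hlk ⊢
          by_cases hli : l = i
          · rw [hli] at hlk ⊢
            rw [hsum2 _ (by
              intro m h1 h2
              rw [hGtoff m i1 h1 h2]
              simp [h2])]
            rw [hGtii1, hGti1i1]
            simp only [star_neg, star_star]
            exact helim
          · apply Finset.sum_eq_zero
            intro m _
            have hlval : (l : ℕ) < (i : ℕ) := by
              have : (l : ℕ) ≠ (i : ℕ) := fun h => hli ((hvi l).mpr h)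
              omega
            by_cases h1 : m = i
            · rw [h1, hM0 i l hlval (fun h => hii1 h.1)]
              simp
            · by_cases h2 : m = i1
              · rw [h2, hM0 i1 l (by omega) (fun h => hli h.2)]
                simp
              · rw [hGtoff m i1 h1 h2, if_neg h2]
                simp
        · rw [Finset.sum_eq_single k]
          · rw [hGtoff k k hk1 hk2, if_pos rfl, hM0 k l hlk (fun h => hk2 h.1)]
            simp
          · intro m _ hm
            rw [hGtcol m k hk1 hk2, if_neg hm]
            simp
          · intro h
            exact absurd (Finset.mem_univ k) h
    · rw [← Matrix.mul_assoc, mul_eq_one_comm.mp hGtu, Matrix.one_mul, hMdef]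
end

section
/- Let n ≥ 1 and let u ∈ ℂⁿ be nonzero. Set θ = Arg(u₁) (the principal argument of the first entry of u, with Arg(0) = 0) and v = u + e^{iθ}·‖u‖₂·e₁, where e₁ is the first standard basis vector. Then v ≠ 0 and the Householder transformation P(v) = I − (2/‖v‖₂²) v v* satisfies P(v)·u = −e^{iθ}·‖u‖₂·e₁. -/
/-- For a nonzero `u ∈ ℂⁿ`, with `θ = Arg u₁` and `v = u + e^{iθ} ‖u‖₂ e₁`, the vector
`v` is nonzero and the Householder transformation `P(v)` maps `u` to
`-e^{iθ} ‖u‖₂ e₁`, zeroing out all trailing entries of `u`. -/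
theorem householder_maps_to_e1 (n : ℕ) (hn : 1 ≤ n)
    (u : Fin n → ℂ) (hu : u ≠ 0) :
    let θ : ℝ := (u ⟨0, hn⟩).arg
    let nrm : ℝ := Real.sqrt (∑ i, Complex.normSq (u i))
    let v : Fin n → ℂ :=
      u + (Complex.exp (θ * Complex.I) * nrm) •
        (Pi.single (⟨0, hn⟩ : Fin n) 1 : Fin n → ℂ)
    v ≠ 0 ∧
      (householder v).mulVec u =
        (-(Complex.exp (θ * Complex.I) * nrm)) •
          (Pi.single (⟨0, hn⟩ : Fin n) 1 : Fin n → ℂ) := by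
  intro θ nrm v
  set i0 : Fin n := ⟨0, hn⟩
  set c : ℂ := Complex.exp (θ * Complex.I) * nrm with hc
  set S : ℝ := ∑ i, Complex.normSq (u i) with hSdef
  have hS : (0:ℝ) < S := by
    obtain ⟨i, hi⟩ : ∃ i, u i ≠ 0 := by
      by_contra h; push_neg at h; exact hu (funext h)
    exact Finset.sum_pos' (fun j _ => Complex.normSq_nonneg _)
      ⟨i, Finset.mem_univ i, Complex.normSq_pos.2 hi⟩
  have hnrm : nrm ^ 2 = S := Real.sq_sqrt hS.le
  have hnrm0 : (0:ℝ) ≤ nrm := Real.sqrt_nonneg _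
  -- conj c * u i0 = nrm * |u i0|
  have hexpabs : ‖Complex.exp (θ * Complex.I)‖ = 1 :=
    Complex.norm_exp_ofReal_mul_I θ
  have hu0 : (‖u i0‖ : ℂ) * Complex.exp (θ * Complex.I) = u i0 :=
    Complex.norm_mul_exp_arg_mul_I (u i0)
  have hexp1 : (starRingEnd ℂ) (Complex.exp (θ * Complex.I)) * Complex.exp (θ * Complex.I) = 1 := by
    rw [← Complex.normSq_eq_conj_mul_self, Complex.normSq_eq_norm_sq, hexpabs]
    norm_num
  have hconjc : (starRingEnd ℂ) c * u i0 = (nrm * ‖u i0‖ : ℝ) := by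
    conv_lhs => rw [← hu0, hc]
    rw [map_mul, Complex.conj_ofReal]
    push_cast
    calc (starRingEnd ℂ) (Complex.exp (θ * Complex.I)) * nrm *
          ((‖u i0‖ : ℂ) * Complex.exp (θ * Complex.I))
        = (nrm : ℂ) * (‖u i0‖ : ℂ) *
          ((starRingEnd ℂ) (Complex.exp (θ * Complex.I)) * Complex.exp (θ * Complex.I)) := by ring
      _ = (nrm : ℂ) * (‖u i0‖ : ℂ) := by rw [hexp1, mul_one]
  have hnormSqc : Complex.normSq c = S := by
    rw [hc, Complex.normSq_mul, Complex.normSq_eq_norm_sq, hexpabs,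
      Complex.normSq_ofReal, one_pow, one_mul, ← hnrm, sq]
  set b : ℝ := nrm * ‖u i0‖ with hb
  have hbnn : 0 ≤ b := mul_nonneg hnrm0 (norm_nonneg _)
  -- star v ⬝ᵥ u = S + b
  have hdot : dotProduct (star v) u = ((S + b : ℝ) : ℂ) := by
    have : star v = star u + (starRingEnd ℂ) c • (Pi.single i0 1 : Fin n → ℂ) := by
      funext i
      simp only [v, Pi.add_apply, Pi.star_apply, star_add, Pi.smul_apply, star_smul, smul_eq_mul]
      by_cases h : i = i0
      · subst h; simp [hc, map_mul, Complex.conj_ofReal, i0]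
      · simp [Pi.single_eq_of_ne h]; right; exact Pi.single_eq_of_ne h _
    rw [this, add_dotProduct, smul_dotProduct, single_dotProduct,
      smul_eq_mul, one_mul, hconjc]
    have : dotProduct (star u) u = ((S : ℝ) : ℂ) := by
      simp only [dotProduct, hSdef, Pi.star_apply]
      push_cast
      refine Finset.sum_congr rfl fun i _ => ?_
      simp [Complex.normSq_eq_conj_mul_self]
    rw [this]; push_cast; ring
  -- ∑ normSq (v i) = 2 * (S + b)
  have hsumv : (∑ i, Complex.normSq (v i)) = 2 * (S + b) := by
    have hsplit : (∑ i, Complex.normSq (v i))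
        = Complex.normSq (v i0) + ∑ i ∈ Finset.univ.erase i0, Complex.normSq (v i) := by
      rw [← Finset.add_sum_erase _ _ (Finset.mem_univ i0)]
    have hvother : ∀ i ∈ Finset.univ.erase i0, Complex.normSq (v i) = Complex.normSq (u i) := by
      intro i hi
      have h : i ≠ i0 := Finset.ne_of_mem_erase hi
      simp [v, Pi.single_eq_of_ne h]; rw [Pi.single_eq_of_ne h, mul_zero, add_zero]
    have hv0 : Complex.normSq (v i0) = Complex.normSq (u i0) + S + 2 * b := by
      have : v i0 = u i0 + c := by simp [v, i0, c]
      rw [this, Complex.normSq_add, hnormSqc]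
      have : (u i0 * (starRingEnd ℂ) c).re = b := by
        rw [mul_comm, hconjc, Complex.ofReal_re]
      rw [this]
    have hS2 : Complex.normSq (u i0) + ∑ i ∈ Finset.univ.erase i0, Complex.normSq (u i) = S := by
      rw [hSdef]; exact Finset.add_sum_erase Finset.univ (fun i => Complex.normSq (u i)) (Finset.mem_univ i0)
    rw [hsplit, Finset.sum_congr rfl hvother, hv0]
    linarith
  have hSb : (0:ℝ) < S + b := by linarith
  constructor
  · intro h0
    rw [h0] at hsumv
    simp at hsumv
    linarith
  · -- compute mulVec
    have hkey : (((2 / ∑ i, Complex.normSq (v i) : ℝ) : ℂ)) * dotProduct (star v) u = 1 := by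
      have hreal : 2 / (2 * (S + b)) * (S + b) = 1 := by
        field_simp
      rw [hdot, hsumv, ← Complex.ofReal_mul, hreal, Complex.ofReal_one]
    funext i
    simp only [householder, Matrix.sub_mulVec, Matrix.one_mulVec, Matrix.smul_mulVec,
      Pi.sub_apply, Pi.smul_apply, smul_eq_mul]
    have hmv : (Matrix.vecMulVec v (star v)).mulVec u i = v i * dotProduct (star v) u := by
      simp [Matrix.mulVec, dotProduct, Matrix.vecMulVec_apply, Finset.mul_sum, mul_assoc]
    rw [hmv, ← mul_assoc, mul_comm (((2 / ∑ i, Complex.normSq (v i) : ℝ) : ℂ)) (v i), mul_assoc,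
      hkey, mul_one]
    simp only [v, Pi.add_apply, Pi.smul_apply, Pi.neg_apply, smul_eq_mul]
    ring
end
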